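/- Define sequences A_n, B_n, H_n by A_1 = 2/3, B_1 = H_1 = 1/3, and for n ≥ 2 with γ_n = n/(n+2): A_n = γ_n B_{n-1}² + (1-γ_n), B_n = γ_n √(A_{n-1}), H_n = γ_n (1 - H_{n-1}). Then for all n ≥ 1: A_n = (n+3)/(3(n+1)), B_n = √(n/(3(n+2))), and H_n = n/(2(n+1)) if n is even, H_n = (n+1)/(2(n+2)) if n is odd. -/

import Mathlib

open Real

theorem stmt_10 (A B H : ℕ → ℝ)
    (hA1 : A 1 = 2 / 3) (hB1 : B 1 = 1 / 3) (hH1 : H 1 = 1 / 3)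
    (hA : ∀ n, 2 ≤ n → A n = ((n : ℝ) / ((n : ℝ) + 2)) * (B (n - 1)) ^ 2 + (1 - (n : ℝ) / ((n : ℝ) + 2)))
    (hB : ∀ n, 2 ≤ n → B n = ((n : ℝ) / ((n : ℝ) + 2)) * Real.sqrt (A (n - 1)))
    (hH : ∀ n, 2 ≤ n → H n = ((n : ℝ) / ((n : ℝ) + 2)) * (1 - H (n - 1))) :
    ∀ n, 1 ≤ n →
      A n = ((n : ℝ) + 3) / (3 * ((n : ℝ) + 1)) ∧
      B n = Real.sqrt ((n : ℝ) / (3 * ((n : ℝ) + 2))) ∧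
      H n = (if Even n then (n : ℝ) / (2 * ((n : ℝ) + 1)) else ((n : ℝ) + 1) / (2 * ((n : ℝ) + 2))) := by
  intro n hn
  induction n, hn using Nat.le_induction with
  | base =>
    refine ⟨by rw [hA1]; norm_num, ?_, ?_⟩
    · rw [hB1]
      norm_num
    · simp [hH1]
      norm_num
  | succ n hn ih =>
    obtain ⟨ihA, ihB, ihH⟩ := ih
    have h2 : 2 ≤ n + 1 := by omega
    have hs : (n + 1 : ℕ) - 1 = n := rfl
    have hn1 : (0:ℝ) < (n:ℝ) + 1 := by positivity
    have hn2 : (0:ℝ) < (n:ℝ) + 2 := by positivity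
    have hn3 : (0:ℝ) < (n:ℝ) + 3 := by positivity
    refine ⟨?_, ?_, ?_⟩
    · rw [hA _ h2, hs, ihB, sq_sqrt (by positivity)]
      push_cast
      field_simp
      ring
    · rw [hB _ h2, hs, ihA]
      push_cast
      have : ((n:ℝ) + 1) / ((n:ℝ) + 1 + 2) * Real.sqrt (((n:ℝ) + 3) / (3 * ((n:ℝ) + 1)))
          = Real.sqrt ((((n:ℝ)+1)/((n:ℝ)+3))^2 * (((n:ℝ) + 3) / (3 * ((n:ℝ) + 1)))) := by
        rw [Real.sqrt_mul (by positivity), Real.sqrt_sq (by positivity)]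
        ring_nf
      rw [this]
      congr 1
      field_simp
      ring
    · rw [hH _ h2, hs, ihH]
      rcases Nat.even_or_odd n with he | ho
      · rw [if_pos he, if_neg (by simp [Nat.even_add_one, he])]
        push_cast
        field_simp
        ring
      · rw [if_neg (by simpa using ho), if_pos (by simp [Nat.even_add_one, Nat.not_even_iff_odd.mpr ho])]
        push_cast
        field_simp
        ring
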